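/- Let 1 ≤ i < q ≤ t be integers and let 𝓗 be a q-uniform hypergraph on n vertices such that Δ_i(𝓗) ≤ C(x - i, q - i) for some real number x ≥ q, where C denotes the generalized binomial coefficient. Then the number of t-cliques of 𝓗 is at most ( C(n, i) / C(x, i) ) · C(x, t), i.e. C(x, i) · N(K_t^{(q)}, 𝓗) ≤ C(n, i) · C(x, t). -/

import Mathlib

/-- The generalized binomial coefficient `C(x, k) = x(x-1)⋯(x-k+1)/k!` for `x ≥ k-1`,
and `0` for `x < k-1`. -/
noncomputable def gchoose (x : ℝ) (k : ℕ) : ℝ :=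
  if x < (k : ℝ) - 1 then 0 else (∏ i ∈ Finset.range k, (x - i)) / (Nat.factorial k)

open Finset

lemma factor_nonneg {x : ℝ} {k : ℕ} (hx : ¬ x < (k : ℝ) - 1) {j : ℕ} (hj : j ∈ Finset.range k) :
    0 ≤ x - j := by
  push_neg at hx
  rw [mem_range] at hj
  have : (j : ℝ) ≤ (k : ℝ) - 1 := by
    have : (j : ℝ) + 1 ≤ (k : ℝ) := by exact_mod_cast hj
    linarith
  linarith

lemma gchoose_nonneg (x : ℝ) (k : ℕ) : 0 ≤ gchoose x k := by
  unfold gchoose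
  split
  · rfl
  · next h =>
    apply div_nonneg
    · exact Finset.prod_nonneg fun j hj => factor_nonneg h hj
    · positivity

lemma gchoose_of_le {x : ℝ} {k : ℕ} (h : (k : ℝ) - 1 ≤ x) :
    gchoose x k = (∏ i ∈ Finset.range k, (x - i)) / (Nat.factorial k) := by
  rw [gchoose, if_neg (not_lt.2 h)]

lemma gchoose_pos {x : ℝ} {k : ℕ} (h : (k : ℝ) - 1 < x) : 0 < gchoose x k := by
  rw [gchoose_of_le h.le]
  apply div_pos
  · apply Finset.prod_pos
    intro j hj
    rw [mem_range] at hj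
    have : (j : ℝ) + 1 ≤ (k : ℝ) := by exact_mod_cast hj
    linarith
  · positivity

lemma gchoose_mono {x y : ℝ} (k : ℕ) (hxy : x ≤ y) : gchoose x k ≤ gchoose y k := by
  unfold gchoose
  split
  · next h =>
    split
    · rfl
    · next h' =>
      apply div_nonneg
      · exact Finset.prod_nonneg fun j hj => factor_nonneg h' hj
      · positivity
  · next h =>
    rw [if_neg (by push_neg at h ⊢; linarith)]
    gcongr (?_) / (_ : ℝ) with j hj
    case hab => exact Finset.prod_le_prod (fun j hj => factor_nonneg h hj) (fun j hj => by linarith)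

lemma gchoose_strict_mono {x y : ℝ} {k : ℕ} (hk : 1 ≤ k) (hx : (k : ℝ) - 1 ≤ x) (hxy : x < y) :
    gchoose x k < gchoose y k := by
  have hy : (k : ℝ) - 1 < y := lt_of_le_of_lt hx hxy
  rcases eq_or_lt_of_le hx with heq | hlt
  · rw [gchoose_of_le hx]
    have : (∏ i ∈ Finset.range k, (x - i)) = 0 := by
      apply Finset.prod_eq_zero (i := k - 1)
      · rw [mem_range]; omega
      · rw [← heq]
        have : ((k - 1 : ℕ) : ℝ) = (k : ℝ) - 1 := by
          have : 1 ≤ k := hk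
          rw [Nat.cast_sub this]
          simp
        rw [this]; ring
    rw [this, zero_div]
    exact gchoose_pos hy
  · rw [gchoose_of_le hx, gchoose_of_le hy.le]
    apply div_lt_div_of_pos_right ?_ (by positivity : (0:ℝ) < Nat.factorial k)
    apply Finset.prod_lt_prod_of_nonempty
    · intro j hj
      rw [mem_range] at hj
      have : (j : ℝ) + 1 ≤ (k : ℝ) := by exact_mod_cast hj
      linarith
    · intro j hj; linarith
    · exact Finset.nonempty_range_iff.2 (by omega)

lemma gchoose_pascal {x : ℝ} {k : ℕ} (h : ((k : ℝ) + 1) ≤ x) :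
    gchoose x (k + 1) = gchoose (x - 1) k + gchoose (x - 1) (k + 1) := by
  have h1 : ((k + 1 : ℕ) : ℝ) - 1 ≤ x := by push_cast; linarith
  have h2 : ((k : ℕ) : ℝ) - 1 ≤ x - 1 := by push_cast; linarith
  have h3 : ((k + 1 : ℕ) : ℝ) - 1 ≤ x - 1 := by push_cast; linarith
  rw [gchoose_of_le h1, gchoose_of_le h2, gchoose_of_le h3]
  have e1 : ∏ i ∈ Finset.range (k + 1), (x - i) = x * ∏ i ∈ Finset.range k, (x - 1 - i) := by
    rw [Finset.prod_range_succ']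
    push_cast
    rw [sub_zero, mul_comm]
    congr 1
    apply Finset.prod_congr rfl
    intro j hj; ring
  have e2 : ∏ i ∈ Finset.range (k + 1), (x - 1 - i) = (∏ i ∈ Finset.range k, (x - 1 - i)) * (x - 1 - k) := by
    rw [Finset.prod_range_succ]
  rw [e1, e2]
  have hf : (Nat.factorial (k+1) : ℝ) = (k+1) * Nat.factorial k := by
    push_cast [Nat.factorial_succ]; ring
  rw [hf]
  have hfk : (Nat.factorial k : ℝ) ≠ 0 := by positivity
  field_simp
  ring

lemma prod_range_cast_eq_descFactorial (m : ℕ) :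
    ∀ k : ℕ, k ≤ m → (∏ j ∈ Finset.range k, ((m : ℝ) - j)) = (m.descFactorial k : ℝ)
  | 0, _ => by simp
  | (k+1), h => by
    rw [Finset.prod_range_succ, prod_range_cast_eq_descFactorial m k (by omega),
      Nat.descFactorial_succ]
    rw [Nat.cast_mul, Nat.cast_sub (by omega : k ≤ m)]
    ring

lemma gchoose_natCast (m k : ℕ) : gchoose (m : ℝ) k = (m.choose k : ℝ) := by
  rcases le_or_gt k m with h | h
  · have hc : ((k:ℝ)) - 1 ≤ (m:ℝ) := by
      have : (k:ℝ) ≤ (m:ℝ) := by exact_mod_cast h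
      linarith
    rw [gchoose_of_le hc, prod_range_cast_eq_descFactorial m k h,
      Nat.descFactorial_eq_factorial_mul_choose]
    rw [Nat.cast_mul]
    rw [mul_comm, mul_div_assoc, div_self (by positivity : (Nat.factorial k : ℝ) ≠ 0), mul_one]
  · rw [Nat.choose_eq_zero_of_lt h, Nat.cast_zero]
    rcases lt_or_ge (m : ℝ) ((k : ℝ) - 1) with h' | h'
    · rw [gchoose, if_pos h']
    · have hmk : m = k - 1 := by
        have h2 : (m : ℝ) + 1 ≤ (k : ℝ) := by exact_mod_cast h
        have h3 : (k : ℝ) ≤ (m : ℝ) + 1 := by linarith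
        have : (m : ℝ) + 1 = (k : ℝ) := le_antisymm h2 h3
        have : m + 1 = k := by exact_mod_cast this
        omega
      rw [gchoose_of_le h']
      have : (∏ j ∈ Finset.range k, ((m : ℝ) - j)) = 0 := by
        apply Finset.prod_eq_zero (i := m)
        · rw [Finset.mem_range]; omega
        · ring
      rw [this, zero_div]

lemma gchoose_mul_choose {x : ℝ} {i t : ℕ} (hit : i ≤ t) (hx : (t : ℝ) ≤ x) :
    gchoose x t * (t.choose i : ℝ) = gchoose x i * gchoose (x - i) (t - i) := by
  obtain ⟨u, rfl⟩ : ∃ u, t = i + u := ⟨t - i, by omega⟩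
  simp only [Nat.add_sub_cancel_left]
  have hiu : ((i + u : ℕ) : ℝ) = (i : ℝ) + u := by push_cast; ring
  have ht1 : ((i + u : ℕ) : ℝ) - 1 ≤ x := by linarith
  have hi1 : (i : ℝ) - 1 ≤ x := by
    rw [hiu] at hx
    have : (0:ℝ) ≤ (u:ℝ) := Nat.cast_nonneg u
    linarith
  have hu1 : ((u : ℕ) : ℝ) - 1 ≤ x - i := by
    rw [hiu] at hx; linarith
  rw [gchoose_of_le ht1, gchoose_of_le hi1, gchoose_of_le hu1]
  have hsplit : (∏ j ∈ Finset.range (i + u), (x - j)) =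
      (∏ j ∈ Finset.range i, (x - j)) * (∏ j ∈ Finset.range u, (x - (i : ℝ) - j)) := by
    rw [Finset.prod_range_add]
    congr 1
    apply Finset.prod_congr rfl
    intro j hj
    push_cast
    ring
  have hfact : (((i + u).choose i : ℕ) : ℝ) * (Nat.factorial i : ℝ) * (Nat.factorial u : ℝ)
      = (Nat.factorial (i + u) : ℝ) := by
    have := Nat.choose_mul_factorial_mul_factorial (Nat.le_add_right i u)
    rw [Nat.add_sub_cancel_left] at this
    exact_mod_cast congrArg (Nat.cast : ℕ → ℝ) this
  have h1 : (Nat.factorial (i + u) : ℝ) ≠ 0 := by positivity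
  have h2 : (Nat.factorial i : ℝ) ≠ 0 := by positivity
  have h3 : (Nat.factorial u : ℝ) ≠ 0 := by positivity
  rw [div_mul_eq_mul_div, div_mul_div_comm, div_eq_div_iff h1 (mul_ne_zero h2 h3),
    hsplit, ← hfact]
  ring

lemma exists_gchoose_eq (k m : ℕ) (hk : 1 ≤ k) :
    ∃ z : ℝ, (k : ℝ) - 1 ≤ z ∧ gchoose z k = (m : ℝ) := by
  set g : ℝ → ℝ := fun z => (∏ j ∈ Finset.range k, (z - j)) / (Nat.factorial k : ℝ) with hg
  have hcont : Continuous g := by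
    apply Continuous.div_const
    apply continuous_finset_prod
    intro j _
    exact continuous_id.sub continuous_const
  have ha : g ((k : ℝ) - 1) = 0 := by
    rw [hg]
    simp only
    rw [Finset.prod_eq_zero (i := k - 1) (by rw [Finset.mem_range]; omega)
      (by rw [Nat.cast_sub (by omega : 1 ≤ k)]; push_cast; ring), zero_div]
  set b : ℝ := (k : ℝ) + m * (Nat.factorial k : ℝ) with hb
  have hfpos : (0:ℝ) < Nat.factorial k := by positivity
  have hab : (k : ℝ) - 1 ≤ b := by
    have : (0:ℝ) ≤ m * (Nat.factorial k : ℝ) := by positivity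
    linarith
  have hgb : (m : ℝ) ≤ g b := by
    obtain ⟨k', rfl⟩ : ∃ k', k = k' + 1 := ⟨k - 1, by omega⟩
    rw [hg]
    simp only
    rw [le_div_iff₀ hfpos]
    have hfac : ∀ j ∈ Finset.range k', (1:ℝ) ≤ b - ((j+1 : ℕ) : ℝ) := by
      intro j hj
      rw [Finset.mem_range] at hj
      have h5 : ((j+1:ℕ) : ℝ) ≤ ((k':ℕ):ℝ) := by exact_mod_cast by omega
      have : (0:ℝ) ≤ m * (Nat.factorial (k'+1) : ℝ) := by positivity
      simp only [hb]
      push_cast at h5 ⊢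
      linarith
    have hprod1 : (1:ℝ) ≤ ∏ j ∈ Finset.range k', (b - ((j+1:ℕ) : ℝ)) := by
      calc (1:ℝ) = ∏ _j ∈ Finset.range k', (1:ℝ) := by rw [Finset.prod_const_one]
        _ ≤ _ := Finset.prod_le_prod (fun j _ => zero_le_one) hfac
    calc (m : ℝ) * (Nat.factorial (k'+1) : ℝ) ≤ b := by
          simp only [hb]
          have : (0:ℝ) ≤ ((k'+1:ℕ):ℝ) := Nat.cast_nonneg _
          linarith
      _ = (b - ((0:ℕ):ℝ)) * 1 := by push_cast; ring
      _ ≤ (b - ((0:ℕ):ℝ)) * ∏ j ∈ Finset.range k', (b - ((j+1:ℕ) : ℝ)) := by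
          apply mul_le_mul_of_nonneg_left hprod1
          have : (0:ℝ) ≤ m * (Nat.factorial (k'+1) : ℝ) := by positivity
          have : (0:ℝ) ≤ ((k'+1:ℕ):ℝ) := Nat.cast_nonneg _
          push_cast at *
          simp only [hb]
          linarith
      _ = ∏ j ∈ Finset.range (k'+1), (b - (j:ℝ)) := by
          rw [Finset.prod_range_succ']
          push_cast
          ring
  have := intermediate_value_Icc hab hcont.continuousOn
  have hmem : (m : ℝ) ∈ Set.Icc (g ((k:ℝ)-1)) (g b) := by
    rw [ha]
    exact ⟨by positivity, hgb⟩
  obtain ⟨z, hz, hgz⟩ := this hmem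
  exact ⟨z, hz.1, by rw [gchoose_of_le hz.1]; exact hgz⟩

open scoped FinsetFamily

section LKK

open Finset

/-- weight of a finset of naturals -/
def setw (S : Finset ℕ) : ℕ := ∑ x ∈ S, x

/-- measure of a family -/
def famw (F : Finset (Finset ℕ)) : ℕ := ∑ S ∈ F, setw S

def Shifted (a : ℕ) (F : Finset (Finset ℕ)) : Prop :=
  ∀ ⦃u v : ℕ⦄ ⦃S : Finset ℕ⦄, S ∈ F → a ≤ u → u < v → v ∈ S → u ∉ S →
    insert u (S.erase v) ∈ F

def Ground (a : ℕ) (F : Finset (Finset ℕ)) : Prop := ∀ S ∈ F, ∀ x ∈ S, a ≤ x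

lemma compress_singleton {u v : ℕ} (hne : u ≠ v) {S : Finset ℕ} (hv : v ∈ S) (hu : u ∉ S) :
    UV.compress {u} {v} S = insert u (S.erase v) := by
  rw [UV.compress, if_pos ⟨Finset.disjoint_singleton_left.2 hu, Finset.singleton_subset_iff.2 hv⟩]
  ext w
  simp only [Finset.mem_sdiff, Finset.sup_eq_union, Finset.mem_union, Finset.mem_singleton,
    Finset.mem_insert, Finset.mem_erase]
  constructor
  · rintro ⟨h1 | h1, h2⟩
    · exact Or.inr ⟨h2, h1⟩
    · exact Or.inl h1
  · rintro (rfl | ⟨h1, h2⟩)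
    · exact ⟨Or.inr rfl, fun h => hu (h ▸ hv)⟩
    · exact ⟨Or.inl h2, h1⟩

lemma setw_compress_lt {u v : ℕ} (huv : u < v) {S : Finset ℕ}
    (h : UV.compress {u} {v} S ≠ S) :
    setw (UV.compress {u} {v} S) < setw S := by
  by_cases hc : u ∉ S ∧ v ∈ S
  · rw [compress_singleton huv.ne hc.2 hc.1] at *
    have hune : u ∉ S.erase v := fun hu => hc.1 (Finset.mem_of_mem_erase hu)
    rw [setw, Finset.sum_insert hune]
    have hsum := Finset.sum_erase_add S (fun x => x) hc.2
    rw [setw, ← hsum]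
    omega
  · exfalso
    apply h
    rw [UV.compress, if_neg]
    rintro ⟨h1, h2⟩
    rw [Finset.disjoint_singleton_left] at h1
    exact hc ⟨h1, Finset.singleton_subset_iff.1 h2⟩

lemma famw_compression_lt {u v : ℕ} (huv : u < v) {F : Finset (Finset ℕ)}
    (h : UV.compression {u} {v} F ≠ F) :
    famw (UV.compression {u} {v} F) < famw F := by
  classical
  rw [UV.compression] at h ⊢
  have q : ∀ S ∈ F.filter (fun A => UV.compress {u} {v} A ∉ F),
      UV.compress {u} {v} S ≠ S := by
    simp_rw [Finset.mem_filter]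
    rintro S ⟨hS1, hS2⟩ hEq
    rw [hEq] at hS2
    exact hS2 hS1
  have uA : F.filter (fun A => UV.compress {u} {v} A ∈ F) ∪
      F.filter (fun A => UV.compress {u} {v} A ∉ F) = F :=
    Finset.filter_union_filter_not_eq _ _
  have ne₂ : (F.filter fun A => UV.compress {u} {v} A ∉ F).Nonempty := by
    refine Finset.nonempty_iff_ne_empty.2 fun z => h ?_
    rw [Finset.filter_image, z, Finset.image_empty, Finset.union_empty]
    rwa [z, Finset.union_empty] at uA
  rw [famw, famw, Finset.sum_union UV.compress_disjoint]
  conv_rhs => rw [← uA]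
  rw [Finset.sum_union (Finset.disjoint_filter_filter_not _ _ _), add_lt_add_iff_left,
    Finset.filter_image, Finset.sum_image UV.compress_injOn]
  exact Finset.sum_lt_sum_of_nonempty ne₂ fun S hS => setw_compress_lt huv (q S hS)

lemma exists_shifted (r : ℕ) : ∀ (m : ℕ) (F : Finset (Finset ℕ)), famw F ≤ m →
    (F : Set (Finset ℕ)).Sized r →
    ∃ G : Finset (Finset ℕ), (G : Set (Finset ℕ)).Sized r ∧ G.card = F.card ∧
      (∂ G).card ≤ (∂ F).card ∧ Shifted 0 G := by
  intro m
  induction m using Nat.strong_induction_on with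
  | _ m ih =>
    intro F hm hsized
    by_cases hsh : ∀ u v : ℕ, u < v → UV.IsCompressed {u} {v} F
    · refine ⟨F, hsized, rfl, le_rfl, ?_⟩
      intro u v S hS _ huv hv hu
      have hmem := UV.compress_mem_compression (u := ({u} : Finset ℕ))
        (v := ({v} : Finset ℕ)) hS
      rw [hsh u v huv, compress_singleton huv.ne hv hu] at hmem
      exact hmem
    · push_neg at hsh
      obtain ⟨u, v, huv, hne⟩ := hsh
      have hne' : UV.compression {u} {v} F ≠ F := hne
      have hlt := famw_compression_lt huv hne'
      have hcsize : ({u} : Finset ℕ).card = ({v} : Finset ℕ).card := by simp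
      obtain ⟨G, h1, h2, h3, h4⟩ := ih (famw (UV.compression {u} {v} F))
        (lt_of_lt_of_le hlt hm) _ le_rfl (hsized.uvCompression hcsize)
      refine ⟨G, h1, ?_, ?_, h4⟩
      · rw [h2, UV.card_compression]
      · refine h3.trans (UV.card_shadow_compression_le _ _ ?_)
        intro x hx
        rw [Finset.mem_singleton] at hx
        subst hx
        refine ⟨v, Finset.mem_singleton_self v, ?_⟩
        rw [Finset.erase_singleton, Finset.erase_singleton]
        exact UV.isCompressed_self _ _

end LKK

open Finset in
lemma gchoose_one_le {y : ℝ} {r : ℕ} (hry : (r : ℝ) ≤ y) : (1:ℝ) ≤ gchoose y r := by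
  have h1 : gchoose ((r:ℕ) : ℝ) r = ((r.choose r : ℕ) : ℝ) := gchoose_natCast r r
  rw [Nat.choose_self] at h1
  calc (1:ℝ) = gchoose ((r:ℕ) : ℝ) r := by rw [h1]; norm_num
    _ ≤ gchoose y r := gchoose_mono r hry

open Finset in
lemma shifted_LKK : ∀ (M r a : ℕ) (F : Finset (Finset ℕ)) (y : ℝ),
    r + F.card ≤ M → 1 ≤ r → (r : ℝ) ≤ y →
    (F : Set (Finset ℕ)).Sized r → Ground a F → Shifted a F →
    gchoose y r ≤ (F.card : ℝ) → gchoose y (r - 1) ≤ ((∂ F).card : ℝ) := by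
  intro M
  induction M using Nat.strong_induction_on with
  | _ M ih =>
  intro r a F y hM hr hry hsized hground hshift hcard
  have hFne : F.Nonempty := by
    have h1 : (1:ℝ) ≤ (F.card : ℝ) := (gchoose_one_le hry).trans hcard
    have h2 : 1 ≤ F.card := by exact_mod_cast h1
    exact Finset.card_pos.1 (by omega)
  match r, hr with
  | 1, _ => -- base case
    obtain ⟨S, hS⟩ := hFne
    have hScard : S.card = 1 := hsized hS
    obtain ⟨b, hb⟩ := Finset.card_eq_one.1 hScard
    have : (∅ : Finset ℕ) ∈ ∂ F := by
      rw [mem_shadow_iff]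
      exact ⟨S, hS, b, by rw [hb]; simp, by rw [hb]; exact Finset.erase_singleton b⟩
    have h1 : 1 ≤ (∂ F).card := Finset.card_pos.2 ⟨∅, this⟩
    have h0 : gchoose y 0 = 1 := by
      rw [gchoose_of_le (by push_cast; linarith)]
      simp
    simpa [h0] using (Nat.one_le_cast (α := ℝ)).2 h1
  | (r'' + 2), _ =>
  set r : ℕ := r'' + 2 with hrdef
  -- the pivot decomposition
  set F₁ : Finset (Finset ℕ) := (F.filter fun S => a ∈ S).image (fun S => S.erase a) with hF₁
  set F₀ : Finset (Finset ℕ) := F.filter (fun S => a ∉ S) with hF₀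
  have hinj : Set.InjOn (fun S => S.erase a)
      (((F.filter fun S => a ∈ S) : Finset (Finset ℕ)) : Set (Finset ℕ)) := by
    intro S hS T hT hST
    simp only [Finset.coe_filter, Set.mem_setOf_eq] at hS hT
    simp only at hST
    rw [← Finset.insert_erase hS.2, hST, Finset.insert_erase hT.2]
  have hcard1 : F₁.card = (F.filter fun S => a ∈ S).card := Finset.card_image_of_injOn hinj
  have hsplit : F₁.card + F₀.card = F.card := by
    rw [hcard1, hF₀]
    exact Finset.card_filter_add_card_filter_not _
  -- F₁ basic facts
  have hF₁mem : ∀ {T : Finset ℕ}, T ∈ F₁ → ∃ S ∈ F, a ∈ S ∧ T = S.erase a := by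
    intro T hT
    rw [hF₁, Finset.mem_image] at hT
    obtain ⟨S, hS, rfl⟩ := hT
    rw [Finset.mem_filter] at hS
    exact ⟨S, hS.1, hS.2, rfl⟩
  have hF₁sized : (F₁ : Set (Finset ℕ)).Sized (r'' + 1) := by
    intro T hT
    obtain ⟨S, hS, haS, rfl⟩ := hF₁mem hT
    rw [Finset.card_erase_of_mem haS, hsized hS]
    omega
  have hF₁ground : Ground (a + 1) F₁ := by
    intro T hT x hx
    obtain ⟨S, hS, haS, rfl⟩ := hF₁mem hT
    rw [Finset.mem_erase] at hx
    have := hground S hS x hx.2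
    omega
  have hF₁shift : Shifted (a + 1) F₁ := by
    intro u v T hT hau huv hv hu
    obtain ⟨S, hS, haS, rfl⟩ := hF₁mem hT
    have hvS : v ∈ S := Finset.mem_of_mem_erase hv
    have hva : v ≠ a := (Finset.mem_erase.1 hv).1
    have huS : u ∉ S := by
      intro huS
      have hua : u ≠ a := by omega
      exact hu (Finset.mem_erase.2 ⟨hua, huS⟩)
    have hnew := hshift hS (by omega) huv hvS huS
    rw [hF₁, Finset.mem_image]
    refine ⟨insert u (S.erase v), Finset.mem_filter.2 ⟨hnew, ?_⟩, ?_⟩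
    · refine Finset.mem_insert.2 (Or.inr (Finset.mem_erase.2 ⟨(by omega : a ≠ v), haS⟩))
    · rw [Finset.erase_insert_of_ne (by omega : u ≠ a)]
      congr 1
      rw [Finset.erase_right_comm]
  have hF₀sized : (F₀ : Set (Finset ℕ)).Sized r := fun S hS =>
    hsized (Finset.mem_filter.1 hS).1
  have hF₀ground : Ground (a + 1) F₀ := by
    intro S hS x hx
    rw [hF₀, Finset.mem_filter] at hS
    have h1 := hground S hS.1 x hx
    have : x ≠ a := fun h => hS.2 (h ▸ hx)
    omega
  have hF₀shift : Shifted (a + 1) F₀ := by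
    intro u v S hS hau huv hv hu
    rw [hF₀, Finset.mem_filter] at hS ⊢
    refine ⟨hshift hS.1 (by omega) huv hv hu, ?_⟩
    intro hmem
    rcases Finset.mem_insert.1 hmem with h | h
    · omega
    · exact hS.2 (Finset.mem_of_mem_erase h)
  have hsub10 : ∂ F₀ ⊆ F₁ := by
    intro T hT
    rw [mem_shadow_iff] at hT
    obtain ⟨S, hS, w, hw, rfl⟩ := hT
    have hSF : S ∈ F := (Finset.mem_filter.1 hS).1
    have haS : a ∉ S := (Finset.mem_filter.1 hS).2
    have haw : a < w := hF₀ground S hS w hw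
    have hnew := hshift hSF le_rfl haw hw haS
    rw [hF₁, Finset.mem_image]
    refine ⟨insert a (S.erase w), Finset.mem_filter.2 ⟨hnew, Finset.mem_insert_self a _⟩, ?_⟩
    rw [Finset.erase_insert]
    intro hmem
    exact haS (Finset.mem_of_mem_erase hmem)
  have hF₁shadow : F₁ ⊆ ∂ F := by
    intro T hT
    obtain ⟨S, hS, haS, rfl⟩ := hF₁mem hT
    rw [mem_shadow_iff]
    exact ⟨S, hS, a, haS, rfl⟩
  have hinsshadow : (∂ F₁).image (insert a) ⊆ ∂ F := by
    intro T hT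
    rw [Finset.mem_image] at hT
    obtain ⟨T', hT', rfl⟩ := hT
    rw [mem_shadow_iff] at hT'
    obtain ⟨T'', hT'', w, hw, rfl⟩ := hT'
    obtain ⟨S, hS, haS, rfl⟩ := hF₁mem hT''
    rw [mem_shadow_iff]
    refine ⟨S, hS, w, Finset.mem_of_mem_erase hw, ?_⟩
    have hwa : w ≠ a := (Finset.mem_erase.1 hw).1
    rw [Finset.erase_right_comm, Finset.insert_erase]
    exact Finset.mem_erase.2 ⟨fun h => hwa h.symm, haS⟩
  have hkey : (F₁.card : ℕ) + (∂ F₁).card ≤ (∂ F).card := by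
    have hdisj : Disjoint F₁ ((∂ F₁).image (insert a)) := by
      rw [Finset.disjoint_left]
      intro T hT hT2
      rw [Finset.mem_image] at hT2
      obtain ⟨T', _, rfl⟩ := hT2
      obtain ⟨S, hS, haS, heq⟩ := hF₁mem hT
      have : a ∈ insert a T' := Finset.mem_insert_self a T'
      rw [heq] at this
      exact (Finset.mem_erase.1 this).1 rfl
    have hcardins : ((∂ F₁).image (insert a)).card = (∂ F₁).card := by
      apply Finset.card_image_of_injOn
      intro T hT T' hT' hTT'
      have haT : a ∉ T := by
        rw [Finset.mem_coe, mem_shadow_iff] at hT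
        obtain ⟨S', hS', w, hw, rfl⟩ := hT
        intro hmem
        have := hF₁ground S' hS' a (Finset.mem_of_mem_erase hmem)
        omega
      have haT' : a ∉ T' := by
        rw [Finset.mem_coe, mem_shadow_iff] at hT'
        obtain ⟨S', hS', w, hw, rfl⟩ := hT'
        intro hmem
        have := hF₁ground S' hS' a (Finset.mem_of_mem_erase hmem)
        omega
      rw [← Finset.erase_insert haT, hTT', Finset.erase_insert haT']
    calc F₁.card + (∂ F₁).card = (F₁ ∪ (∂ F₁).image (insert a)).card := by
          rw [Finset.card_union_of_disjoint hdisj, hcardins]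
      _ ≤ (∂ F).card := Finset.card_le_card (Finset.union_subset hF₁shadow hinsshadow)
  show gchoose y (r'' + 1) ≤ ((∂ F).card : ℝ)
  by_cases hcase : gchoose (y - 1) (r'' + 1) ≤ (F₁.card : ℝ)
  · -- main case
    have hy1 : ((r'' + 1 : ℕ) : ℝ) ≤ y - 1 := by push_cast [hrdef] at hry ⊢; linarith
    have hIH := ih (r'' + 1 + F₁.card) (by
        have : F₁.card ≤ F.card := by omega
        omega) (r'' + 1) (a + 1) F₁ (y - 1) le_rfl (by omega) hy1 hF₁sized hF₁ground hF₁shift hcase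
    have hpascal : gchoose y (r'' + 1) = gchoose (y - 1) r'' + gchoose (y - 1) (r'' + 1) := by
      apply gchoose_pascal
      push_cast [hrdef] at hry ⊢
      linarith
    rw [hpascal]
    have : gchoose (y - 1) r'' ≤ ((∂ F₁).card : ℝ) := by simpa using hIH
    calc gchoose (y - 1) r'' + gchoose (y - 1) (r'' + 1)
        ≤ ((∂ F₁).card : ℝ) + (F₁.card : ℝ) := add_le_add this hcase
      _ ≤ ((∂ F).card : ℝ) := by
          rw [add_comm]
          exact_mod_cast hkey
  · -- contradiction case
    exfalso
    push_neg at hcase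
    have hF₁ne : F₁.Nonempty := by
      by_contra hne
      rw [Finset.not_nonempty_iff_eq_empty] at hne
      obtain ⟨S, hS⟩ := hFne
      have hSF₀ : S ∈ F₀ := by
        rw [hF₀, Finset.mem_filter]
        refine ⟨hS, fun haS => ?_⟩
        have : S.erase a ∈ F₁ := by
          rw [hF₁, Finset.mem_image]
          exact ⟨S, Finset.mem_filter.2 ⟨hS, haS⟩, rfl⟩
        rw [hne] at this
        exact absurd this (Finset.notMem_empty _)
      have hSne : S.Nonempty := by
        rw [← Finset.card_pos, hsized hS]; omega
      obtain ⟨w, hw⟩ := hSne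
      have : S.erase w ∈ F₁ := hsub10 (by rw [mem_shadow_iff]; exact ⟨S, hSF₀, w, hw, rfl⟩)
      rw [hne] at this
      exact absurd this (Finset.notMem_empty _)
    have hpascal : gchoose y r = gchoose (y - 1) (r'' + 1) + gchoose (y - 1) r := by
      apply gchoose_pascal (k := r'' + 1)
      push_cast [hrdef] at hry ⊢
      linarith
    have hF₀big : gchoose (y - 1) r < (F₀.card : ℝ) := by
      have h1 : (F.card : ℝ) = (F₁.card : ℝ) + (F₀.card : ℝ) := by exact_mod_cast hsplit.symm
      rw [hpascal] at hcard
      linarith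
    by_cases hy2 : ((r : ℕ) : ℝ) ≤ y - 1
    · -- apply IH to F₀
      have hF₀lt : F₀.card < F.card := by
        have : 1 ≤ F₁.card := Finset.card_pos.2 hF₁ne
        omega
      have hIH := ih (r + F₀.card) (by omega) r (a + 1) F₀ (y - 1) le_rfl (by omega) hy2
        hF₀sized hF₀ground hF₀shift hF₀big.le
      have h2 : ((∂ F₀).card : ℝ) ≤ (F₁.card : ℝ) := by
        exact_mod_cast Finset.card_le_card hsub10
      have h3 : gchoose (y - 1) (r - 1) ≤ (F₁.card : ℝ) := hIH.trans h2
      have : gchoose (y - 1) (r'' + 1) ≤ (F₁.card : ℝ) := by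
        simpa [hrdef] using h3
      linarith
    · -- small y case
      push_neg at hy2
      have hF₀ne : F₀.Nonempty := by
        rw [← Finset.card_pos, ← Nat.cast_pos (α := ℝ)]
        have := gchoose_nonneg (y - 1) r
        linarith
      obtain ⟨S, hS⟩ := hF₀ne
      have hScard : S.card = r := hF₀sized hS
      have hrle : r ≤ F₁.card := by
        rw [← hScard]
        apply Finset.card_le_card_of_injOn (fun w => S.erase w)
        · intro w hw
          exact hsub10 (by rw [mem_shadow_iff]; exact ⟨S, hS, w, hw, rfl⟩)
        · intro w hw w' hw' heq
          simp only at heq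
          by_contra hne
          have : w' ∈ S.erase w := Finset.mem_erase.2 ⟨fun h => hne h.symm, hw'⟩
          rw [heq] at this
          exact (Finset.mem_erase.1 this).1 rfl
      have hup : gchoose (y - 1) (r'' + 1) ≤ ((r'' + 2 : ℕ) : ℝ) := by
        calc gchoose (y - 1) (r'' + 1) ≤ gchoose ((r'' + 2 : ℕ) : ℝ) (r'' + 1) := by
              apply gchoose_mono
              push_cast [hrdef] at hy2 ⊢
              linarith
          _ = (((r'' + 2).choose (r'' + 1) : ℕ) : ℝ) := gchoose_natCast _ _
          _ = ((r'' + 2 : ℕ) : ℝ) := by rw [Nat.choose_succ_self_right]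
      have : (F₁.card : ℝ) < ((r'' + 2 : ℕ) : ℝ) := lt_of_lt_of_le hcase hup
      have : ((r : ℕ) : ℝ) ≤ (F₁.card : ℝ) := by exact_mod_cast hrle
      push_cast at *
      linarith [show ((r:ℕ):ℝ) = r'' + 2 by simp [hrdef]]

open Finset in
lemma LKK_step {r : ℕ} {F : Finset (Finset ℕ)} {y : ℝ} (hr : 1 ≤ r) (hry : (r : ℝ) ≤ y)
    (hsized : (F : Set (Finset ℕ)).Sized r) (hcard : gchoose y r ≤ (F.card : ℝ)) :
    gchoose y (r - 1) ≤ ((∂ F).card : ℝ) := by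
  obtain ⟨G, hGsized, hGcard, hGshadow, hGshift⟩ := exists_shifted r (famw F) F le_rfl hsized
  have hGground : Ground 0 G := fun S _ x _ => Nat.zero_le x
  have := shifted_LKK (r + G.card) r 0 G y le_rfl hr hry hGsized hGground hGshift
    (by rw [hGcard]; exact hcard)
  calc gchoose y (r - 1) ≤ ((∂ G).card : ℝ) := this
    _ ≤ ((∂ F).card : ℝ) := by exact_mod_cast hGshadow

open Finset in
lemma LKK_chain {s : ℕ} (hs : 1 ≤ s) (G : ℕ → Finset (Finset ℕ))
    (hsized : ∀ r, ((G r : Set (Finset ℕ))).Sized r)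
    (hsub : ∀ r, ∂ (G (r + 1)) ⊆ G r) :
    ∀ (d : ℕ) (z : ℝ), ((s + d : ℕ) : ℝ) ≤ z → gchoose z (s + d) ≤ ((G (s + d)).card : ℝ) →
      gchoose z s ≤ ((G s).card : ℝ)
  | 0, z, hz, hcard => hcard
  | (d+1), z, hz, hcard => by
    apply LKK_chain hs G hsized hsub d z
    · push_cast at hz ⊢
      linarith
    · have h1 := LKK_step (r := s + d + 1) (by omega) hz (hsized _) hcard
      have h2 : (s + d + 1) - 1 = s + d := by omega
      rw [h2] at h1
      calc gchoose z (s + d) ≤ ((∂ (G (s + d + 1))).card : ℝ) := h1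
        _ ≤ ((G (s + d)).card : ℝ) := by exact_mod_cast Finset.card_le_card (hsub _)

open Finset in
lemma localized {V : Type*} [Fintype V] [DecidableEq V]
    (q t i : ℕ) (hi : 1 ≤ i) (hiq : i < q) (hqt : q ≤ t)
    (E : Finset (Finset V))
    (x : ℝ) (hx : (q : ℝ) ≤ x)
    (hΔ : ∀ I : Finset V, I.card = i →
      ((E.filter fun e => I ⊆ e).card : ℝ) ≤ gchoose (x - i) (q - i))
    (cliques : Finset (Finset V))
    (hcl : ∀ T : Finset V, T ∈ cliques ↔ T.card = t ∧ ∀ S ∈ T.powersetCard q, S ∈ E)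
    (I : Finset V) (hI : I.card = i) :
    ((cliques.filter fun T => I ⊆ T).card : ℝ) ≤ gchoose (x - i) (t - i) := by
  classical
  set f : V ↪ ℕ := (Fintype.equivFin V).toEmbedding.trans Fin.valEmbedding with hf
  set H : ℕ → Finset (Finset V) := fun r =>
    ((Finset.univ \ I).powersetCard r).filter
      (fun U => ∀ S ∈ U.powersetCard (q - i), I ∪ S ∈ E) with hH
  set G : ℕ → Finset (Finset ℕ) := fun r => (H r).image (fun U => U.map f) with hG
  have hHmem : ∀ {r : ℕ} {U : Finset V}, U ∈ H r ↔
      (U ⊆ Finset.univ \ I ∧ U.card = r) ∧ ∀ S ∈ U.powersetCard (q - i), I ∪ S ∈ E := by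
    intro r U
    rw [hH]
    simp only [Finset.mem_filter, Finset.mem_powersetCard]
  have hGcard : ∀ r, (G r).card = (H r).card := by
    intro r
    apply Finset.card_image_of_injOn
    exact (Finset.map_injective f).injOn
  have hGsized : ∀ r, ((G r : Set (Finset ℕ))).Sized r := by
    intro r T hT
    rw [hG] at hT
    simp only [Finset.coe_image, Set.mem_image, Finset.mem_coe] at hT
    obtain ⟨U, hU, rfl⟩ := hT
    rw [Finset.card_map]
    exact (hHmem.1 hU).1.2
  have hGsub : ∀ r, ∂ (G (r + 1)) ⊆ G r := by
    intro r T hT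
    rw [mem_shadow_iff] at hT
    obtain ⟨A, hA, m, hm, rfl⟩ := hT
    rw [hG, Finset.mem_image] at hA
    obtain ⟨U, hU, rfl⟩ := hA
    obtain ⟨u, hu, rfl⟩ := Finset.mem_map.1 hm
    rw [← Finset.map_erase]
    rw [hG, Finset.mem_image]
    refine ⟨U.erase u, ?_, rfl⟩
    obtain ⟨⟨hU1, hU2⟩, hU3⟩ := hHmem.1 hU
    refine hHmem.2 ⟨⟨(Finset.erase_subset _ _).trans hU1, ?_⟩, ?_⟩
    · rw [Finset.card_erase_of_mem hu, hU2]
      omega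
    · intro S hS
      rw [Finset.mem_powersetCard] at hS
      exact hU3 S (Finset.mem_powersetCard.2 ⟨hS.1.trans (Finset.erase_subset _ _), hS.2⟩)
  -- Step 1 : cliques containing I inject into H (t - i)
  have hstep1 : (cliques.filter fun T => I ⊆ T).card ≤ (H (t - i)).card := by
    apply Finset.card_le_card_of_injOn (fun T => T \ I)
    · intro T hT
      rw [Finset.mem_coe, Finset.mem_filter] at hT
      obtain ⟨hTcl, hIT⟩ := hT
      obtain ⟨hTcard, hTE⟩ := (hcl T).1 hTcl
      refine hHmem.2 ⟨⟨?_, ?_⟩, ?_⟩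
      · intro w hw
        rw [Finset.mem_sdiff] at hw ⊢
        exact ⟨Finset.mem_univ w, hw.2⟩
      · rw [Finset.card_sdiff_of_subset hIT, hTcard, hI]
      · intro S hS
        rw [Finset.mem_powersetCard] at hS
        apply hTE
        rw [Finset.mem_powersetCard]
        have hdisj : Disjoint I S := by
          rw [Finset.disjoint_left]
          intro w hwI hwS
          exact (Finset.mem_sdiff.1 (hS.1 hwS)).2 hwI
        constructor
        · exact Finset.union_subset hIT (hS.1.trans Finset.sdiff_subset)
        · rw [Finset.card_union_of_disjoint hdisj, hI, hS.2]
          omega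
    · intro T hT T' hT' heq
      rw [Finset.mem_coe, Finset.mem_filter] at hT hT'
      simp only at heq
      rw [← Finset.union_sdiff_of_subset hT.2, heq, Finset.union_sdiff_of_subset hT'.2]
  -- Step 2 : H (q - i) injects into the I-degree
  have hstep2 : (H (q - i)).card ≤ (E.filter fun e => I ⊆ e).card := by
    apply Finset.card_le_card_of_injOn (fun U => I ∪ U)
    · intro U hU
      obtain ⟨⟨hU1, hU2⟩, hU3⟩ := hHmem.1 hU
      rw [Finset.mem_coe, Finset.mem_filter]
      exact ⟨hU3 U (Finset.mem_powersetCard.2 ⟨Finset.Subset.refl U, hU2⟩),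
        Finset.subset_union_left⟩
    · intro U hU U' hU' heq
      rw [Finset.mem_coe] at hU hU'
      obtain ⟨⟨hU1, _⟩, _⟩ := hHmem.1 hU
      obtain ⟨⟨hU1', _⟩, _⟩ := hHmem.1 hU'
      have hd : Disjoint I U := by
        rw [Finset.disjoint_left]
        intro w hwI hwU
        exact (Finset.mem_sdiff.1 (hU1 hwU)).2 hwI
      have hd' : Disjoint I U' := by
        rw [Finset.disjoint_left]
        intro w hwI hwU
        exact (Finset.mem_sdiff.1 (hU1' hwU)).2 hwI
      simp only at heq
      rw [← Finset.union_sdiff_cancel_left hd, heq, Finset.union_sdiff_cancel_left hd']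
  -- Main argument
  by_contra hcon
  push_neg at hcon
  set m : ℕ := (H (t - i)).card with hm
  have hm1 : gchoose (x - i) (t - i) < (m : ℝ) := by
    apply lt_of_lt_of_le hcon
    exact_mod_cast hstep1
  have hmpos : (1 : ℝ) ≤ (m : ℝ) := by
    have h0 := gchoose_nonneg (x - i) (t - i)
    have : (0:ℝ) < (m:ℝ) := lt_of_le_of_lt h0 hm1
    exact_mod_cast this
  obtain ⟨z, hz1, hz2⟩ := exists_gchoose_eq (t - i) m (by omega)
  have hzt : ((t - i : ℕ) : ℝ) ≤ z := by
    by_contra hzt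
    push_neg at hzt
    have h1 : gchoose z (t - i) < gchoose ((t - i : ℕ) : ℝ) (t - i) :=
      gchoose_strict_mono (by omega) hz1 hzt
    rw [gchoose_natCast, Nat.choose_self] at h1
    rw [hz2] at h1
    push_cast at h1
    linarith
  have hchain := LKK_chain (s := q - i) (by omega) G hGsized hGsub (t - q) z
    (by rw [(by omega : q - i + (t - q) = t - i)]; exact hzt)
    (by
      rw [(by omega : q - i + (t - q) = t - i), hGcard, ← hm]
      rw [hz2])
  have hzx : x - i < z := by
    by_contra hzx
    push_neg at hzx
    have := gchoose_mono (t - i) hzx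
    rw [hz2] at this
    linarith
  have hfinal : gchoose (x - i) (q - i) < gchoose z (q - i) := by
    apply gchoose_strict_mono (by omega) _ hzx
    have hc : ((q - i : ℕ) : ℝ) = (q : ℝ) - i := by
      rw [Nat.cast_sub (le_of_lt hiq)]
    rw [hc]
    linarith
  have hlast : gchoose z (q - i) ≤ gchoose (x - i) (q - i) := by
    calc gchoose z (q - i) ≤ ((G (q - i)).card : ℝ) := hchain
      _ = ((H (q - i)).card : ℝ) := by rw [hGcard]
      _ ≤ ((E.filter fun e => I ⊆ e).card : ℝ) := by exact_mod_cast hstep2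
      _ ≤ gchoose (x - i) (q - i) := hΔ I hI
  linarith

theorem stmt_19 {V : Type*} [Fintype V] [DecidableEq V]
    (q t i n : ℕ) (hi : 1 ≤ i) (hiq : i < q) (hqt : q ≤ t)
    (hn : Fintype.card V = n)
    -- the edge set of a `q`-uniform hypergraph `𝓗` on `V`
    (E : Finset (Finset V)) (hunif : ∀ e ∈ E, e.card = q)
    (x : ℝ) (hx : (q : ℝ) ≤ x)
    -- `Δ_i(𝓗) ≤ C(x - i, q - i)`
    (hΔ : ∀ I : Finset V, I.card = i →
      ((E.filter fun e => I ⊆ e).card : ℝ) ≤ gchoose (x - i) (q - i))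
    -- the set of `t`-cliques of `𝓗`
    (cliques : Finset (Finset V))
    (hcl : ∀ T : Finset V,
      T ∈ cliques ↔ T.card = t ∧ ∀ S ∈ T.powersetCard q, S ∈ E) :
    gchoose x i * (cliques.card : ℝ) ≤ (n.choose i : ℝ) * gchoose x t := by
  classical
  have hii : i ≤ t := le_trans (le_of_lt hiq) hqt
  rcases le_or_gt (t : ℝ) x with hxt | hxt
  · -- main case : x ≥ t
    set A : Finset (Finset V) := Finset.univ.powersetCard i with hA
    have hcount : cliques.card * t.choose i =
        ∑ I ∈ A, (cliques.filter fun T => I ⊆ T).card := by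
      have h1 : ∀ I : Finset V, (cliques.filter fun T => I ⊆ T).card =
          ∑ T ∈ cliques, if I ⊆ T then 1 else 0 := by
        intro I
        rw [Finset.card_filter]
      rw [Finset.sum_congr rfl (fun I _ => h1 I), Finset.sum_comm]
      have h2 : ∀ T ∈ cliques, (∑ I ∈ A, if I ⊆ T then 1 else 0) = t.choose i := by
        intro T hT
        rw [← Finset.card_filter]
        have : A.filter (fun I => I ⊆ T) = T.powersetCard i := by
          ext J
          rw [Finset.mem_filter, hA, Finset.mem_powersetCard, Finset.mem_powersetCard]
          constructor
          · rintro ⟨⟨_, hJ2⟩, hJ3⟩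
            exact ⟨hJ3, hJ2⟩
          · rintro ⟨hJ1, hJ2⟩
            exact ⟨⟨Finset.subset_univ J, hJ2⟩, hJ1⟩
        rw [this, Finset.card_powersetCard, ((hcl T).1 hT).1]
      rw [Finset.sum_congr rfl h2, Finset.sum_const, smul_eq_mul, mul_comm]
    have hAcard : A.card = n.choose i := by
      rw [hA, Finset.card_powersetCard, Finset.card_univ, hn]
    have key : (cliques.card : ℝ) * (t.choose i : ℝ) ≤
        (n.choose i : ℝ) * gchoose (x - i) (t - i) := by
      have hc : ((cliques.card * t.choose i : ℕ) : ℝ) =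
          ∑ I ∈ A, ((cliques.filter fun T => I ⊆ T).card : ℝ) := by
        rw [hcount]
        push_cast
        rfl
      have hbd : ∑ I ∈ A, ((cliques.filter fun T => I ⊆ T).card : ℝ) ≤
          ∑ _I ∈ A, gchoose (x - i) (t - i) := by
        apply Finset.sum_le_sum
        intro I hI
        have hIc : I.card = i := (Finset.mem_powersetCard.1 hI).2
        exact localized q t i hi hiq hqt E x hx hΔ cliques hcl I hIc
      rw [Finset.sum_const, nsmul_eq_mul, hAcard] at hbd
      calc (cliques.card : ℝ) * (t.choose i : ℝ)
          = ((cliques.card * t.choose i : ℕ) : ℝ) := by push_cast; ring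
        _ ≤ (n.choose i : ℝ) * gchoose (x - i) (t - i) := by rw [hc]; exact hbd
    have hti : gchoose x t * (t.choose i : ℝ) = gchoose x i * gchoose (x - i) (t - i) :=
      gchoose_mul_choose hii hxt
    have hcp : (0:ℝ) < (t.choose i : ℝ) := by
      exact_mod_cast Nat.choose_pos hii
    apply le_of_mul_le_mul_right _ hcp
    calc gchoose x i * (cliques.card : ℝ) * (t.choose i : ℝ)
        = gchoose x i * ((cliques.card : ℝ) * (t.choose i : ℝ)) := by ring
      _ ≤ gchoose x i * ((n.choose i : ℝ) * gchoose (x - i) (t - i)) := by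
          apply mul_le_mul_of_nonneg_left key (gchoose_nonneg x i)
      _ = (n.choose i : ℝ) * (gchoose x i * gchoose (x - i) (t - i)) := by ring
      _ = (n.choose i : ℝ) * (gchoose x t * (t.choose i : ℝ)) := by rw [hti]
      _ = (n.choose i : ℝ) * gchoose x t * (t.choose i : ℝ) := by ring
  · -- degenerate case : x < t, no cliques
    have hempty : cliques = ∅ := by
      by_contra hne
      obtain ⟨T, hT⟩ := Finset.nonempty_iff_ne_empty.2 hne
      obtain ⟨hTcard, hTE⟩ := (hcl T).1 hT
      obtain ⟨I, hIT, hIc⟩ := Finset.exists_subset_card_eq (s := T) (n := i) (by omega)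
      have hinj : ((T \ I).powersetCard (q - i)).card ≤ (E.filter fun e => I ⊆ e).card := by
        apply Finset.card_le_card_of_injOn (fun S => I ∪ S)
        · intro S hS
          rw [Finset.mem_coe, Finset.mem_powersetCard] at hS
          have hdisj : Disjoint I S := by
            rw [Finset.disjoint_left]
            intro w hwI hwS
            exact (Finset.mem_sdiff.1 (hS.1 hwS)).2 hwI
          rw [Finset.mem_coe, Finset.mem_filter]
          refine ⟨hTE _ ?_, Finset.subset_union_left⟩
          rw [Finset.mem_powersetCard]
          constructor
          · exact Finset.union_subset hIT (hS.1.trans Finset.sdiff_subset)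
          · rw [Finset.card_union_of_disjoint hdisj, hIc, hS.2]
            omega
        · intro S hS S' hS' heq
          rw [Finset.mem_coe, Finset.mem_powersetCard] at hS hS'
          have hd : Disjoint I S := by
            rw [Finset.disjoint_left]
            intro w hwI hwS
            exact (Finset.mem_sdiff.1 (hS.1 hwS)).2 hwI
          have hd' : Disjoint I S' := by
            rw [Finset.disjoint_left]
            intro w hwI hwS
            exact (Finset.mem_sdiff.1 (hS'.1 hwS)).2 hwI
          simp only at heq
          rw [← Finset.union_sdiff_cancel_left hd, heq, Finset.union_sdiff_cancel_left hd']
      rw [Finset.card_powersetCard, Finset.card_sdiff_of_subset hIT, hTcard, hIc] at hinj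
      have h1 : (((t - i).choose (q - i) : ℕ) : ℝ) ≤ gchoose (x - i) (q - i) := by
        calc (((t - i).choose (q - i) : ℕ) : ℝ) ≤ ((E.filter fun e => I ⊆ e).card : ℝ) := by
              exact_mod_cast hinj
          _ ≤ gchoose (x - i) (q - i) := hΔ I hIc
      have h2 : gchoose (x - i) (q - i) < gchoose ((t - i : ℕ) : ℝ) (q - i) := by
        apply gchoose_strict_mono (by omega)
        · have hc : ((q - i : ℕ) : ℝ) = (q : ℝ) - i := by rw [Nat.cast_sub (le_of_lt hiq)]
          rw [hc]; linarith
        · have hc : ((t - i : ℕ) : ℝ) = (t : ℝ) - i := by rw [Nat.cast_sub hii]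
          rw [hc]; linarith
      rw [gchoose_natCast] at h2
      linarith
    rw [hempty]
    simp only [Finset.card_empty, Nat.cast_zero, mul_zero]
    have h1 : (0:ℝ) ≤ (n.choose i : ℝ) := Nat.cast_nonneg _
    have h2 : (0:ℝ) ≤ gchoose x t := gchoose_nonneg x t
    positivity
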